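/- Let r and k be positive integers with k < r, and for integers n with k ≤ n ≤ r define h(n) = H_r + H_n − H_{r−n} − H_{n−k}. Let s = √(k(r+1)) − 1 and suppose k ≤ ⌊s⌋ and ⌈s⌉ ≤ r. Then for every integer n with k ≤ n ≤ r, h(n) ≥ min( h(⌊s⌋), h(⌈s⌉) ); that is, h attains its minimum over {k, k+1, …, r} at ⌊√(k(r+1)) − 1⌋ or ⌈√(k(r+1)) − 1⌉. -/

import Mathlib

/-- `hfun r k n = H_r + H_n - H_{r-n} - H_{n-k}` (natural subtraction inside),
    as a real number. -/
noncomputable def hfun (r k n : ℕ) : ℝ :=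
  (harmonic r : ℝ) + (harmonic n : ℝ) - (harmonic (r - n) : ℝ) - (harmonic (n - k) : ℝ)

lemma hfun_succ (r k n : ℕ) (hk : k ≤ n) (hn : n < r) :
    hfun r k (n+1) = hfun r k n +
      (1/((n:ℝ)+1) + 1/((r:ℝ)-(n:ℝ)) - 1/((n:ℝ)-(k:ℝ)+1)) := by
  have h1 : r - n = (r - (n+1)) + 1 := by omega
  have h2 : n + 1 - k = (n - k) + 1 := by omega
  have e1 : ((r - (n+1) : ℕ) : ℝ) = (r:ℝ) - (n:ℝ) - 1 := by
    have : ((r - (n+1) : ℕ) : ℝ) = (r:ℝ) - ((n:ℝ)+1) := by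
      push_cast [Nat.cast_sub (by omega : n+1 ≤ r)]; ring
    linarith
  have e2 : ((n - k : ℕ) : ℝ) = (n:ℝ) - (k:ℝ) := by
    push_cast [Nat.cast_sub hk]; ring
  have hb : (r:ℝ) - (n:ℝ) ≠ 0 := by
    have : (n:ℝ) < (r:ℝ) := by exact_mod_cast hn
    linarith
  have hc : (n:ℝ) - (k:ℝ) + 1 ≠ 0 := by
    have : (k:ℝ) ≤ (n:ℝ) := by exact_mod_cast hk
    linarith
  unfold hfun
  rw [h1, h2, harmonic_succ, harmonic_succ, harmonic_succ]
  push_cast [e1, e2]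
  rw [sub_add_cancel]
  field_simp
  ring

lemma delta_eq (r k n : ℕ) (hk : k ≤ n) (hn : n < r) :
    1/((n:ℝ)+1) + 1/((r:ℝ)-(n:ℝ)) - 1/((n:ℝ)-(k:ℝ)+1)
      = (((n:ℝ)+1)^2 - (k:ℝ)*((r:ℝ)+1)) / (((n:ℝ)+1)*((r:ℝ)-(n:ℝ))*((n:ℝ)-(k:ℝ)+1)) := by
  have hb : (0:ℝ) < (r:ℝ) - (n:ℝ) := by
    have : (n:ℝ) < (r:ℝ) := by exact_mod_cast hn
    linarith
  have hc : (0:ℝ) < (n:ℝ) - (k:ℝ) + 1 := by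
    have : (k:ℝ) ≤ (n:ℝ) := by exact_mod_cast hk
    linarith
  have ha : (0:ℝ) < (n:ℝ)+1 := by positivity
  field_simp
  ring

lemma denom_pos (r k n : ℕ) (hk : k ≤ n) (hn : n < r) :
    (0:ℝ) < ((n:ℝ)+1)*((r:ℝ)-(n:ℝ))*((n:ℝ)-(k:ℝ)+1) := by
  have hb : (0:ℝ) < (r:ℝ) - (n:ℝ) := by
    have : (n:ℝ) < (r:ℝ) := by exact_mod_cast hn
    linarith
  have hc : (0:ℝ) < (n:ℝ) - (k:ℝ) + 1 := by
    have : (k:ℝ) ≤ (n:ℝ) := by exact_mod_cast hk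
    linarith
  have ha : (0:ℝ) < (n:ℝ)+1 := by positivity
  positivity

theorem stmt1 (r k : ℕ) (hr : 0 < r) (hk : 0 < k) (hkr : k < r)
    (s : ℝ) (hs : s = Real.sqrt ((k : ℝ) * ((r : ℝ) + 1)) - 1)
    (hks : (k : ℤ) ≤ ⌊s⌋) (hsr : ⌈s⌉ ≤ (r : ℤ)) :
    ∀ n : ℕ, k ≤ n → n ≤ r →
      min (hfun r k (⌊s⌋.toNat)) (hfun r k (⌈s⌉.toNat)) ≤ hfun r k n := by
  set K : ℝ := (k : ℝ) * ((r : ℝ) + 1) with hK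
  have hK0 : 0 ≤ K := by positivity
  have hsqK : Real.sqrt K ^ 2 = K := Real.sq_sqrt hK0
  set m : ℕ := ⌊s⌋.toNat with hm
  set M : ℕ := ⌈s⌉.toNat with hM'
  have hfl : (0:ℤ) ≤ ⌊s⌋ := le_trans (by exact_mod_cast hk.le) hks
  have hcl : (0:ℤ) ≤ ⌈s⌉ := le_trans hfl (Int.floor_le_ceil s)
  have hmz : (m : ℤ) = ⌊s⌋ := Int.toNat_of_nonneg hfl
  have hMz : (M : ℤ) = ⌈s⌉ := Int.toNat_of_nonneg hcl
  have hkm : k ≤ m := by omega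
  have hMr : M ≤ r := by omega
  have hmM : m ≤ M := by
    have := Int.floor_le_ceil s; omega
  have hMm1 : M ≤ m + 1 := by
    have := Int.ceil_le_floor_add_one s; omega
  have hms : (m : ℝ) ≤ s := by
    have := Int.floor_le s
    rw [← hmz] at this; exact_mod_cast this
  have hsM : s ≤ (M : ℝ) := by
    have := Int.le_ceil s
    rw [← hMz] at this; exact_mod_cast this
  -- decreasing part: k ≤ n → n ≤ m → hfun m ≤ hfun n
  have dec : ∀ d n : ℕ, n + d = m → k ≤ n → hfun r k m ≤ hfun r k n := by
    intro d
    induction d with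
    | zero => intro n hnm _; simp only [Nat.add_zero] at hnm; rw [← hnm]
    | succ d ih =>
      intro n hnm hkn
      have h1 : hfun r k m ≤ hfun r k (n+1) := ih (n+1) (by omega) (by omega)
      have hnr : n < r := by omega
      have step : hfun r k (n+1) ≤ hfun r k n := by
        rw [hfun_succ r k n hkn hnr, delta_eq r k n hkn hnr]
        have hnum : ((n:ℝ)+1)^2 - K ≤ 0 := by
          have hn1 : (n:ℝ) + 1 ≤ Real.sqrt K := by
            have : (n:ℝ) + 1 ≤ (m:ℝ) := by exact_mod_cast (by omega : n + 1 ≤ m)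
            have := hms
            rw [hs] at this
            linarith
          have h0 : (0:ℝ) ≤ (n:ℝ) + 1 := by positivity
          nlinarith [Real.sqrt_nonneg K]
        have := div_nonpos_of_nonpos_of_nonneg hnum (denom_pos r k n hkn hnr).le
        linarith
      linarith
  -- increasing part: M ≤ n → n ≤ r → hfun M ≤ hfun n
  have inc : ∀ n : ℕ, M ≤ n → n ≤ r → hfun r k M ≤ hfun r k n := by
    intro n hMn
    induction n with
    | zero =>
      intro _
      have : M = 0 := by omega
      rw [this]
    | succ n ih =>
      intro hnr
      rcases Nat.lt_or_ge n M with h | h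
      · have : M = n + 1 := by omega
        rw [this]
      · have h1 : hfun r k M ≤ hfun r k n := ih h (by omega)
        have hkn : k ≤ n := by omega
        have hnr' : n < r := by omega
        have step : hfun r k n ≤ hfun r k (n+1) := by
          rw [hfun_succ r k n hkn hnr', delta_eq r k n hkn hnr']
          have hnum : (0:ℝ) ≤ ((n:ℝ)+1)^2 - K := by
            have hn1 : Real.sqrt K ≤ (n:ℝ) + 1 := by
              have hMn' : (M:ℝ) ≤ (n:ℝ) := by exact_mod_cast h
              rw [hs] at hsM
              linarith
            have h0 : (0:ℝ) ≤ Real.sqrt K := Real.sqrt_nonneg K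
            nlinarith
          have := div_nonneg hnum (denom_pos r k n hkn hnr').le
          linarith
        linarith
  intro n hkn hnr
  rcases le_or_gt n m with h | h
  · exact le_trans (min_le_left _ _) (dec (m - n) n (by omega) hkn)
  · exact le_trans (min_le_right _ _) (inc n (by omega) hnr)
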